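/- The Diophantine equation 5^x + 2 = 3^z has only the solution (x, z) = (2, 3) in positive integers x, z. -/
import Mathlib

theorem stmt7 (x z : ℕ) (hx : 0 < x) (hz : 0 < z) (h : 5^x + 2 = 3^z) :
    x = 2 ∧ z = 3 := by
  by_cases hz4 : z ≤ 3
  · -- small cases z = 1, 2, 3
    have h5 : 5 ^ 1 ≤ 5 ^ x := Nat.pow_le_pow_right (by norm_num) hx
    interval_cases z
    · omega
    · -- 5^x = 7 impossible since 5 ∣ 5^x
      have : 5 ∣ 5 ^ x := dvd_pow_self 5 hx.ne'
      omega
    · -- 5^x = 25 → x = 2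
      have hx2 : 5 ^ x = 5 ^ 2 := by omega
      exact ⟨Nat.pow_right_injective (by norm_num) hx2, rfl⟩
  · exfalso
    push_neg at hz4
    -- mod 81 : 3^z ≡ 0, so 5^x ≡ -2, forcing x ≡ 20 [MOD 54]
    have hdvd : (81 : ℕ) ∣ 3 ^ z := by
      have : (3:ℕ) ^ 4 ∣ 3 ^ z := pow_dvd_pow 3 hz4
      simpa using this
    have h81 : ((5 : ZMod 81)) ^ x + 2 = 0 := by
      have := congrArg (Nat.cast : ℕ → ZMod 81) h
      push_cast at this
      rw [this]
      exact_mod_cast (ZMod.natCast_eq_zero_iff _ _).mpr hdvd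
    have hpow81 : ((5 : ZMod 81)) ^ x = 5 ^ (x % 54) := by
      conv_lhs => rw [← Nat.div_add_mod x 54]
      rw [pow_add, pow_mul, show (5 : ZMod 81) ^ 54 = 1 by decide, one_pow, one_mul]
    have hmod : x % 54 = 20 := by
      have hb : ∀ r < 54, (5 : ZMod 81) ^ r + 2 = 0 → r = 20 := by decide
      exact hb _ (Nat.mod_lt x (by norm_num)) (by rw [← hpow81]; exact h81)
    -- mod 109 : 5^x = 5^20 = 35, so 3^z = 37, but 37 is not a power of 3 mod 109
    have h109 : ((5 : ZMod 109)) ^ x + 2 = 3 ^ z := by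
      have := congrArg (Nat.cast : ℕ → ZMod 109) h
      push_cast at this
      exact this
    have hpow109 : ((5 : ZMod 109)) ^ x = 35 := by
      conv_lhs => rw [← Nat.div_add_mod x 54]
      rw [pow_add, pow_mul, hmod, show (5 : ZMod 109) ^ 54 = 1 by decide, one_pow,
        one_mul, show (5 : ZMod 109) ^ 20 = 35 by decide]
    have hz109 : ((3 : ZMod 109)) ^ z = 3 ^ (z % 27) := by
      conv_lhs => rw [← Nat.div_add_mod z 27]
      rw [pow_add, pow_mul, show (3 : ZMod 109) ^ 27 = 1 by decide, one_pow, one_mul]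
    have hb : ∀ m < 27, (3 : ZMod 109) ^ m ≠ 37 := by decide
    apply hb _ (Nat.mod_lt z (by norm_num))
    rw [← hz109, ← h109, hpow109]
    decide
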